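/- Fix a real E-by-V matrix d, a diagonal V-by-V matrix ★₀ with positive diagonal, a diagonal E-by-E matrix ★₁, a vertex v ∈ V, and n = |V|. For t ∈ ℝ let ★₀(t) = ★₀ + t Eᵥᵥ. Suppose xⁱ(t) ∈ ℝ^V and λⁱ(t) ∈ ℝ (i = 1, …, n) are differentiable at 0, satisfy dᵀ★₁d xⁱ(t) = λⁱ(t) ★₀(t) xⁱ(t) and (xⁱ(t))ᵀ★₀(t)xⁱ(t) = 1 near 0, satisfy (xⁱ(0))ᵀ★₀xʲ(0) = δᵢⱼ, and the eigenvalues λ¹(0), …, λⁿ(0) are pairwise distinct. Then for each i, (xⁱ)'(0) = Σⱼ Nᵢⱼ · xʲᵥ(0) · xⁱᵥ(0) · xʲ(0), where Nᵢⱼ = λⁱ(0)/(λʲ(0) − λⁱ(0)) for j ≠ i and Nᵢᵢ = −1/2, and xʲᵥ(0) denotes component v of xʲ(0). -/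

import Mathlib

open Matrix Filter Topology

private lemma dot_sum' {V ι : Type*} [Fintype V] [Fintype ι] (y : V → ℝ) (f : ι → V → ℝ) :
    y ⬝ᵥ (∑ k, f k) = ∑ k, y ⬝ᵥ f k := by
  simp only [dotProduct, Finset.sum_apply, Finset.mul_sum]
  exact Finset.sum_comm

private lemma sum_dot' {V ι : Type*} [Fintype V] [Fintype ι] (y : V → ℝ) (f : ι → V → ℝ) :
    (∑ k, f k) ⬝ᵥ y = ∑ k, f k ⬝ᵥ y := by
  simp only [dotProduct, Finset.sum_apply, Finset.sum_mul]
  exact Finset.sum_comm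

private lemma diag_symm' {V : Type*} [Fintype V] [DecidableEq V] (s : V → ℝ) (y z : V → ℝ) :
    (Matrix.diagonal s *ᵥ y) ⬝ᵥ z = y ⬝ᵥ (Matrix.diagonal s *ᵥ z) := by
  simp only [dotProduct, Matrix.mulVec_diagonal]
  exact Finset.sum_congr rfl fun w _ => by ring

/-- Derivative of a `★₀`-orthonormalized generalized eigenvector of the pencil
`(dᵀ★₁d, ★₀(t))` under perturbation `★₀(t) = ★₀ + t Eᵥᵥ`, with pairwise distinct eigenvalues:
`(xⁱ)'(0) = Σⱼ Nᵢⱼ xʲᵥ xⁱᵥ xʲ`, where `Nᵢⱼ = λⁱ/(λʲ − λⁱ)` for `j ≠ i` and `Nᵢᵢ = −1/2`. -/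

theorem stmt_13 {E V : Type*} [Fintype E] [Fintype V] [DecidableEq E] [DecidableEq V]
    (d : Matrix E V ℝ) (s0 : V → ℝ) (hs0 : ∀ v, 0 < s0 v) (s1 : E → ℝ) (v : V)
    (x : V → ℝ → V → ℝ) (lam : V → ℝ → ℝ)
    (x' : V → V → ℝ) (lam' : V → ℝ)
    (hx : ∀ i, HasDerivAt (x i) (x' i) 0)
    (hlam : ∀ i, HasDerivAt (lam i) (lam' i) 0)
    (heig : ∀ i, ∀ᶠ t in 𝓝 (0 : ℝ),
      (dᵀ * Matrix.diagonal s1 * d) *ᵥ x i t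
        = lam i t • ((Matrix.diagonal s0 + t • Matrix.single v v 1) *ᵥ x i t))
    (hnorm : ∀ i, ∀ᶠ t in 𝓝 (0 : ℝ),
      x i t ⬝ᵥ ((Matrix.diagonal s0 + t • Matrix.single v v 1) *ᵥ x i t) = 1)
    (horth : ∀ i j, x i 0 ⬝ᵥ (Matrix.diagonal s0 *ᵥ x j 0) = if i = j then 1 else 0)
    (hdist : ∀ i j, i ≠ j → lam i 0 ≠ lam j 0) :
    ∀ i, x' i = ∑ j,
      ((if j = i then (-(1 : ℝ) / 2) else lam i 0 / (lam j 0 - lam i 0))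
        * x j 0 v * x i 0 v) • x j 0 := by
  classical
  intro i
  set A := dᵀ * Matrix.diagonal s1 * d with hA
  set B := Matrix.single v v (1:ℝ) with hB
  have hAsymm : Aᵀ = A := by
    rw [hA]
    simp [Matrix.transpose_mul, Matrix.mul_assoc]
  have hxc : ∀ j w, HasDerivAt (fun t => x j t w) (x' j w) 0 :=
    fun j w => hasDerivAt_pi.mp (hx j) w
  -- dot with stdBasisMatrix
  have hBdot : ∀ y z : V → ℝ, y ⬝ᵥ (B *ᵥ z) = y v * z v := by
    intro y z
    simp [hB, Matrix.single_mulVec, dotProduct, Function.update,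
      Finset.sum_ite_eq', mul_ite]
  -- derivative of the S(t)-part, componentwise
  have hSc : ∀ w, HasDerivAt (fun t => ((Matrix.diagonal s0 + t • B) *ᵥ x i t) w)
      ((Matrix.diagonal s0 *ᵥ x' i) w + (B *ᵥ x i 0) w) 0 := by
    intro w
    have h1 : ∀ u : V, HasDerivAt (fun t : ℝ => (Matrix.diagonal s0 w u + t * B w u) * x i t u)
        (B w u * x i 0 u + Matrix.diagonal s0 w u * x' i u) 0 := by
      intro u
      have ha : HasDerivAt (fun t : ℝ => Matrix.diagonal s0 w u + t * B w u) (B w u) 0 := by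
        simpa using ((hasDerivAt_id (0:ℝ)).mul_const (B w u)).const_add (Matrix.diagonal s0 w u)
      simpa using ha.fun_mul (hxc i u)
    have hsum := HasDerivAt.fun_sum (fun u (_ : u ∈ Finset.univ) => h1 u)
    have hfun : (fun t => ((Matrix.diagonal s0 + t • B) *ᵥ x i t) w)
        = fun t => ∑ u, (Matrix.diagonal s0 w u + t * B w u) * x i t u := by
      funext t
      simp [Matrix.mulVec, dotProduct, Matrix.add_apply, Matrix.smul_apply, smul_eq_mul]
    have hval : (Matrix.diagonal s0 *ᵥ x' i) w + (B *ᵥ x i 0) w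
        = ∑ u, (B w u * x i 0 u + Matrix.diagonal s0 w u * x' i u) := by
      simp only [Matrix.mulVec, dotProduct, Finset.sum_add_distrib]
      exact add_comm _ _
    rw [hfun, hval]
    exact hsum
  -- derivative of LHS, componentwise
  have hf : ∀ w, HasDerivAt (fun t => (A *ᵥ x i t) w) ((A *ᵥ x' i) w) 0 := by
    intro w
    have hsum := HasDerivAt.fun_sum (fun u (_ : u ∈ Finset.univ) => (hxc i u).const_mul (A w u))
    have hfun : (fun t => (A *ᵥ x i t) w) = fun t => ∑ u, A w u * x i t u := by
      funext t; simp [Matrix.mulVec, dotProduct]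
    have hval : (A *ᵥ x' i) w = ∑ u, A w u * x' i u := by
      simp [Matrix.mulVec, dotProduct]
    rw [hfun, hval]
    exact hsum
  -- derivative of RHS, componentwise
  have hg : ∀ w, HasDerivAt (fun t => (lam i t • ((Matrix.diagonal s0 + t • B) *ᵥ x i t)) w)
      (lam' i * (Matrix.diagonal s0 *ᵥ x i 0) w
        + lam i 0 * ((Matrix.diagonal s0 *ᵥ x' i) w + (B *ᵥ x i 0) w)) 0 := by
    intro w
    have := (hlam i).fun_mul (hSc w)
    simpa using this
  -- differentiated eigenvalue equation
  have key : ∀ w, (A *ᵥ x' i) w = lam' i * (Matrix.diagonal s0 *ᵥ x i 0) w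
      + lam i 0 * ((Matrix.diagonal s0 *ᵥ x' i) w + (B *ᵥ x i 0) w) := by
    intro w
    have hev : (fun t => (A *ᵥ x i t) w)
        =ᶠ[𝓝 (0:ℝ)] (fun t => (lam i t • ((Matrix.diagonal s0 + t • B) *ᵥ x i t)) w) :=
      (heig i).mono fun t ht => congrFun ht w
    exact (hev.hasDerivAt_iff.mp (hf w)).unique (hg w)
  have eq1 : A *ᵥ x' i = lam' i • (Matrix.diagonal s0 *ᵥ x i 0)
      + lam i 0 • (Matrix.diagonal s0 *ᵥ x' i + B *ᵥ x i 0) := by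
    funext w
    simp only [Pi.add_apply, Pi.smul_apply, smul_eq_mul]
    exact key w
  -- differentiated normalization
  have hNder : HasDerivAt (fun t => x i t ⬝ᵥ ((Matrix.diagonal s0 + t • B) *ᵥ x i t))
      (∑ w, (x' i w * (Matrix.diagonal s0 *ᵥ x i 0) w
        + x i 0 w * ((Matrix.diagonal s0 *ᵥ x' i) w + (B *ᵥ x i 0) w))) 0 := by
    have hterm : ∀ w : V, HasDerivAt
        (fun t => x i t w * ((Matrix.diagonal s0 + t • B) *ᵥ x i t) w)
        (x' i w * (Matrix.diagonal s0 *ᵥ x i 0) w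
          + x i 0 w * ((Matrix.diagonal s0 *ᵥ x' i) w + (B *ᵥ x i 0) w)) 0 := by
      intro w
      have := (hxc i w).fun_mul (hSc w)
      simpa using this
    have hsum := HasDerivAt.fun_sum (fun w (_ : w ∈ Finset.univ) => hterm w)
    have hfun : (fun t => x i t ⬝ᵥ ((Matrix.diagonal s0 + t • B) *ᵥ x i t))
        = fun t => ∑ w, x i t w * ((Matrix.diagonal s0 + t • B) *ᵥ x i t) w := by
      funext t; simp [dotProduct]
    rw [hfun]
    exact hsum
  have hN0 : (∑ w, (x' i w * (Matrix.diagonal s0 *ᵥ x i 0) w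
      + x i 0 w * ((Matrix.diagonal s0 *ᵥ x' i) w + (B *ᵥ x i 0) w))) = 0 := by
    have hevN : (fun t => x i t ⬝ᵥ ((Matrix.diagonal s0 + t • B) *ᵥ x i t))
        =ᶠ[𝓝 (0:ℝ)] fun _ => (1:ℝ) := (hnorm i).mono fun t ht => ht
    exact (hevN.hasDerivAt_iff.mp hNder).unique (hasDerivAt_const 0 1)
  have hNdot : x' i ⬝ᵥ (Matrix.diagonal s0 *ᵥ x i 0)
      + (x i 0 ⬝ᵥ (Matrix.diagonal s0 *ᵥ x' i) + x i 0 ⬝ᵥ (B *ᵥ x i 0)) = 0 := by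
    have hrw : (∑ w, (x' i w * (Matrix.diagonal s0 *ᵥ x i 0) w
        + x i 0 w * ((Matrix.diagonal s0 *ᵥ x' i) w + (B *ᵥ x i 0) w)))
        = x' i ⬝ᵥ (Matrix.diagonal s0 *ᵥ x i 0)
          + (x i 0 ⬝ᵥ (Matrix.diagonal s0 *ᵥ x' i) + x i 0 ⬝ᵥ (B *ᵥ x i 0)) := by
      simp only [dotProduct, mul_add, Finset.sum_add_distrib]
    rwa [hrw] at hN0
  -- the diagonal coefficient
  have hci : x i 0 ⬝ᵥ (Matrix.diagonal s0 *ᵥ x' i) = (-(1:ℝ)/2) * x i 0 v * x i 0 v := by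
    have h1 : x' i ⬝ᵥ (Matrix.diagonal s0 *ᵥ x i 0)
        = x i 0 ⬝ᵥ (Matrix.diagonal s0 *ᵥ x' i) := by
      rw [dotProduct_comm, diag_symm']
    have h2 := hBdot (x i 0) (x i 0)
    rw [h1, h2] at hNdot
    linarith
  -- eigenvalue equation at 0
  have heig0 : ∀ j, A *ᵥ x j 0 = lam j 0 • (Matrix.diagonal s0 *ᵥ x j 0) := by
    intro j
    have := (heig j).self_of_nhds
    simpa [hB] using this
  -- the coefficients
  set cc : V → ℝ := fun j => (if j = i then (-(1 : ℝ) / 2) else lam i 0 / (lam j 0 - lam i 0))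
      * x j 0 v * x i 0 v with hcc
  have claim : ∀ j, x j 0 ⬝ᵥ (Matrix.diagonal s0 *ᵥ x' i) = cc j := by
    intro j
    by_cases hji : j = i
    · subst hji
      rw [hcc]
      simp only [if_pos rfl]
      exact hci
    · have hL : x j 0 ⬝ᵥ (A *ᵥ x' i)
          = lam j 0 * (x j 0 ⬝ᵥ (Matrix.diagonal s0 *ᵥ x' i)) := by
        rw [Matrix.dotProduct_mulVec, ← hAsymm, Matrix.vecMul_transpose, heig0 j,
          smul_dotProduct, diag_symm']
        simp [smul_eq_mul]
      have hR : x j 0 ⬝ᵥ (lam' i • (Matrix.diagonal s0 *ᵥ x i 0)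
            + lam i 0 • (Matrix.diagonal s0 *ᵥ x' i + B *ᵥ x i 0))
          = lam i 0 * (x j 0 ⬝ᵥ (Matrix.diagonal s0 *ᵥ x' i) + x j 0 v * x i 0 v) := by
        rw [dotProduct_add, dotProduct_smul, dotProduct_smul,
          dotProduct_add, horth j i, if_neg hji, hBdot]
        simp [smul_eq_mul]
      have hE : lam j 0 * (x j 0 ⬝ᵥ (Matrix.diagonal s0 *ᵥ x' i))
          = lam i 0 * (x j 0 ⬝ᵥ (Matrix.diagonal s0 *ᵥ x' i) + x j 0 v * x i 0 v) := by
        rw [← hL, eq1, hR]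
      have hne : lam j 0 - lam i 0 ≠ 0 := sub_ne_zero.mpr (hdist j i hji)
      rw [hcc]
      simp only [if_neg hji]
      rw [div_mul_eq_mul_div, div_mul_eq_mul_div, eq_div_iff hne]
      linear_combination hE
  -- orthonormal family is a basis
  have hli : LinearIndependent ℝ (fun j => x j 0) := by
    rw [Fintype.linearIndependent_iff]
    intro g hg j
    have h1 : x j 0 ⬝ᵥ (Matrix.diagonal s0 *ᵥ (∑ k, g k • x k 0)) = g j := by
      rw [← diag_symm', dot_sum']
      have hterm : ∀ k : V, (Matrix.diagonal s0 *ᵥ x j 0) ⬝ᵥ (g k • x k 0)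
          = if j = k then g k else 0 := by
        intro k
        rw [dotProduct_smul, diag_symm', horth j k]
        simp [smul_eq_mul, mul_ite]
      simp only [hterm]
      simp
    rw [hg] at h1
    simpa using h1.symm
  have hcard : Fintype.card V = Module.finrank ℝ (V → ℝ) := (Module.finrank_pi ℝ).symm
  have hspan := hli.span_eq_top_of_card_eq_finrank' hcard
  set y : V → ℝ := x' i - ∑ j, cc j • x j 0 with hy
  have hyo : ∀ j, x j 0 ⬝ᵥ (Matrix.diagonal s0 *ᵥ y) = 0 := by
    intro j
    rw [hy, Matrix.mulVec_sub, dotProduct_sub, claim j]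
    have h2 : x j 0 ⬝ᵥ (Matrix.diagonal s0 *ᵥ (∑ k, cc k • x k 0)) = cc j := by
      rw [← diag_symm', dot_sum']
      have hterm : ∀ k : V, (Matrix.diagonal s0 *ᵥ x j 0) ⬝ᵥ (cc k • x k 0)
          = if j = k then cc k else 0 := by
        intro k
        rw [dotProduct_smul, diag_symm', horth j k]
        simp [smul_eq_mul, mul_ite]
      simp only [hterm]
      simp
    rw [h2, sub_self]
  have hy0 : y = 0 := by
    have hmem : y ∈ Submodule.span ℝ (Set.range fun j => x j 0) := by
      rw [hspan]; trivial
    obtain ⟨a, ha⟩ := (Submodule.mem_span_range_iff_exists_fun ℝ).mp hmem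
    have hq : y ⬝ᵥ (Matrix.diagonal s0 *ᵥ y) = 0 := by
      calc y ⬝ᵥ (Matrix.diagonal s0 *ᵥ y)
          = (∑ j, a j • x j 0) ⬝ᵥ (Matrix.diagonal s0 *ᵥ y) := by rw [ha]
        _ = ∑ j, (a j • x j 0) ⬝ᵥ (Matrix.diagonal s0 *ᵥ y) := sum_dot' _ _
        _ = ∑ j, a j * (x j 0 ⬝ᵥ (Matrix.diagonal s0 *ᵥ y)) := by
            simp [smul_dotProduct, smul_eq_mul]
        _ = 0 := by simp [hyo]
    have hexp : y ⬝ᵥ (Matrix.diagonal s0 *ᵥ y) = ∑ w, s0 w * (y w * y w) := by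
      simp only [dotProduct, Matrix.mulVec_diagonal]
      exact Finset.sum_congr rfl fun w _ => by ring
    funext w
    have hz := (Finset.sum_eq_zero_iff_of_nonneg
      (fun w _ => mul_nonneg (hs0 w).le (mul_self_nonneg (y w)))).mp
      (hexp ▸ hq) w (Finset.mem_univ w)
    have := mul_eq_zero.mp hz
    rcases this with h | h
    · exact absurd h (ne_of_gt (hs0 w))
    · simpa using mul_self_eq_zero.mp h
  have : x' i = ∑ j, cc j • x j 0 := by
    have := sub_eq_zero.mp (hy ▸ hy0)
    exact this
  rw [this, hcc]
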